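/- Let $r\geq 2$ and $n\in\mathbb{N}$. Let $\widehat{v}=[\widehat{v_1},\ldots,\widehat{v_r}]$ be a $1\times r$ row vector of $2\pi$-periodic trigonometric polynomials with $\widehat{v}(0)\neq 0$. Then there exists an $r\times r$ matrix $\widehat{U}$ of $2\pi$-periodic trigonometric polynomials with $\det(\widehat{U}(\xi))=1$ for all $\xi$ (hence $\widehat{U}$ is strongly invertible) such that $\widehat{v}(\xi)\widehat{U}(\xi)=[1,0,\ldots,0]+O(|\xi|^n)$ as $\xi\to 0$. -/

import Mathlib

/-- The symbol of a finitely supported scalar sequence (trigonometric polynomial). -/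
noncomputable def trigSym (c : ℤ →₀ ℂ) (ξ : ℝ) : ℂ :=
  c.sum fun k a => a * Complex.exp (-Complex.I * (k : ℂ) * (ξ : ℂ))

/-- The symbol of a finitely supported matrix-valued sequence. -/
noncomputable def trigSymM {α β : Type*} (U : ℤ →₀ Matrix α β ℂ) (ξ : ℝ) : Matrix α β ℂ :=
  U.sum fun k A => Complex.exp (-Complex.I * (k : ℂ) * (ξ : ℂ)) • A

/-- `f(ξ) = g(ξ) + O(|ξ|^n)` as `ξ → 0`: derivatives at `0` agree up to order `n-1`. -/
def derivsMatch (n : ℕ) (f g : ℝ → ℂ) : Prop :=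
  ∀ j < n, iteratedDeriv j f 0 = iteratedDeriv j g 0

namespace RowNorm

open Complex PowerSeries Finset Nat

noncomputable section

abbrev S : Type := AddMonoidAlgebra ℂ ℤ

/-- Evaluation monoid hom at a point `ξ`. -/
def gE (ξ : ℝ) : Multiplicative ℤ →* ℂ where
  toFun k := Complex.exp (-Complex.I * ((Multiplicative.toAdd k : ℤ) : ℂ) * (ξ : ℂ))
  map_one' := by simp
  map_mul' k l := by
    show Complex.exp (-Complex.I * ((Multiplicative.toAdd (k * l) : ℤ) : ℂ) * (ξ : ℂ)) = _
    rw [← Complex.exp_add]; congr 1; rw [toAdd_mul]; push_cast; ring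

/-- Evaluation algebra hom at a point `ξ`. -/
def evE (ξ : ℝ) : S →ₐ[ℂ] ℂ := AddMonoidAlgebra.lift ℂ ℂ ℤ (gE ξ)

lemma trigSym_eq (f : S) (ξ : ℝ) : trigSym f.coeff ξ = evE ξ f := by
  rw [evE, AddMonoidAlgebra.lift_apply]
  simp [trigSym, gE, smul_eq_mul]

lemma evE_single (ξ : ℝ) (c : ℂ) : evE ξ (AddMonoidAlgebra.single 0 c) = c := by
  rw [evE, AddMonoidAlgebra.lift_single]
  simp [gE]

/-- The formal Taylor-series monoid hom `k ↦ exp(-ikX)`. -/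
def gP : Multiplicative ℤ →* ℂ⟦X⟧ where
  toFun k := rescale (-Complex.I * ((Multiplicative.toAdd k : ℤ) : ℂ)) (PowerSeries.exp ℂ)
  map_one' := by
    show rescale (-Complex.I * ((Multiplicative.toAdd (1 : Multiplicative ℤ) : ℤ) : ℂ))
        (PowerSeries.exp ℂ) = 1
    have h : (-Complex.I * ((Multiplicative.toAdd (1 : Multiplicative ℤ) : ℤ) : ℂ)) = 0 := by
      simp
    rw [h, rescale_zero]
    simp [PowerSeries.exp, PowerSeries.constantCoeff_mk]
  map_mul' k l := by
    show rescale _ (PowerSeries.exp ℂ) = rescale _ (PowerSeries.exp ℂ) * rescale _ (PowerSeries.exp ℂ)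
    rw [exp_mul_exp_eq_exp_add]
    congr 1
    rw [toAdd_mul]
    push_cast
    ring

lemma gP_apply (k : ℤ) :
    gP (Multiplicative.ofAdd k) = rescale (-Complex.I * (k : ℂ)) (PowerSeries.exp ℂ) := rfl

/-- The formal Taylor series of a trigonometric polynomial at `0`. -/
def T : S →ₐ[ℂ] ℂ⟦X⟧ := AddMonoidAlgebra.lift ℂ ℂ⟦X⟧ ℤ gP

lemma coeff_T (f : S) (j : ℕ) :
    PowerSeries.coeff j (T f) =
      ((j ! : ℂ))⁻¹ * f.coeff.sum fun k a => a * (-Complex.I * (k : ℂ)) ^ j := by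
  rw [T, AddMonoidAlgebra.lift_apply, map_finsuppSum]
  rw [Finsupp.mul_sum]
  refine Finsupp.sum_congr fun k _ => ?_
  rw [coeff_smul, smul_eq_mul, gP_apply, PowerSeries.coeff_rescale, PowerSeries.coeff_exp,
    eq_ratCast]
  push_cast
  field_simp

/-- The `j`-th moment of the coefficients. -/
def moment (j : ℕ) (f : ℤ →₀ ℂ) : ℂ := f.sum fun k a => a * (-Complex.I * (k : ℂ)) ^ j

lemma moment_eq_coeff (j : ℕ) (f : S) :
    moment j f.coeff = (j ! : ℂ) * PowerSeries.coeff j (T f) := by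
  rw [coeff_T, moment, ← mul_assoc, mul_inv_cancel₀ (by exact_mod_cast j.factorial_ne_zero),
    one_mul]

lemma hasDerivAt_term (a μ : ℂ) (x : ℝ) :
    HasDerivAt (fun ξ : ℝ => a * Complex.exp (μ * ξ)) (a * (μ * Complex.exp (μ * x))) x := by
  have h1 : HasDerivAt (fun z : ℂ => Complex.exp (μ * z)) (Complex.exp (μ * x) * μ) (x : ℂ) := by
    simpa [Function.comp_def] using
      (Complex.hasDerivAt_exp (μ * (x : ℂ))).comp (x : ℂ)
        ((hasDerivAt_id (x : ℂ)).const_mul μ)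
  have h2 := h1.comp_ofReal
  simpa [mul_comm, mul_assoc, mul_left_comm] using h2.const_mul a

lemma iteratedDeriv_trigSym (f : ℤ →₀ ℂ) (j : ℕ) :
    iteratedDeriv j (trigSym f) = fun ξ : ℝ =>
      f.sum fun k a => a * (-Complex.I * (k : ℂ)) ^ j *
        Complex.exp (-Complex.I * (k : ℂ) * (ξ : ℂ)) := by
  induction j with
  | zero =>
    funext ξ
    simp only [iteratedDeriv_zero, trigSym, pow_zero, mul_one]
  | succ j ih =>
    rw [iteratedDeriv_succ, ih]
    funext ξ
    have key : HasDerivAt (fun ξ : ℝ => f.sum fun k a => a * (-Complex.I * (k : ℂ)) ^ j *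
          Complex.exp (-Complex.I * (k : ℂ) * (ξ : ℂ)))
        (f.sum fun k a => a * (-Complex.I * (k : ℂ)) ^ (j + 1) *
          Complex.exp (-Complex.I * (k : ℂ) * (ξ : ℂ))) ξ := by
      simp only [Finsupp.sum]
      apply HasDerivAt.fun_sum
      intro k _
      have h := hasDerivAt_term (f k * (-Complex.I * (k : ℂ)) ^ j) (-Complex.I * (k : ℂ)) ξ
      refine h.congr_deriv ?_
      ring
    exact key.deriv

lemma derivsMatch_of_dvd (n : ℕ) (f h : S)
    (hd : (PowerSeries.X : ℂ⟦X⟧) ^ n ∣ T f - T h) :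
    derivsMatch n (trigSym f.coeff) (trigSym h.coeff) := by
  intro j hj
  have hc : PowerSeries.coeff j (T f) = PowerSeries.coeff j (T h) := by
    have h0 := (PowerSeries.X_pow_dvd_iff).1 hd j hj
    rw [map_sub, sub_eq_zero] at h0
    exact h0
  have hm : moment j f.coeff = moment j h.coeff := by rw [moment_eq_coeff, moment_eq_coeff, hc]
  rw [iteratedDeriv_trigSym, iteratedDeriv_trigSym]
  simpa [moment, Complex.ofReal_zero, mul_zero, Complex.exp_zero, mul_one] using hm

/-- The quotient of power series mod `X^n`. -/
abbrev Q (n : ℕ) : Type := ℂ⟦X⟧ ⧸ Ideal.span {(PowerSeries.X : ℂ⟦X⟧) ^ n}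

/-- Taylor jet at the origin, as a ring hom. -/
def ε (n : ℕ) : S →+* Q n := (Ideal.Quotient.mk _).comp T.toRingHom

lemma derivsMatch_of_ε_eq (n : ℕ) (f h : S) (he : ε n f = ε n h) :
    derivsMatch n (trigSym f.coeff) (trigSym h.coeff) := by
  apply derivsMatch_of_dvd
  have h2 : Ideal.Quotient.mk (Ideal.span {(PowerSeries.X : ℂ⟦X⟧) ^ n}) (T f)
      = Ideal.Quotient.mk _ (T h) := he
  have h3 := Ideal.Quotient.eq.mp h2
  rwa [Ideal.mem_span_singleton] at h3

lemma constantCoeff_T (f : S) : PowerSeries.constantCoeff (T f) = evE 0 f := by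
  rw [← PowerSeries.coeff_zero_eq_constantCoeff_apply, coeff_T, ← trigSym_eq]
  simp [trigSym]

lemma ε_nilpotent (n : ℕ) (u : S) (h0 : evE 0 u = 0) : (ε n u) ^ n = 0 := by
  rw [← map_pow]
  show Ideal.Quotient.mk _ (T (u ^ n)) = 0
  rw [Ideal.Quotient.eq_zero_iff_mem, Ideal.mem_span_singleton, map_pow]
  exact pow_dvd_pow_of_dvd (PowerSeries.X_dvd_iff.mpr (by rw [constantCoeff_T, h0])) n

lemma ε_one_sub (n : ℕ) (u : S) : ε n (1 - u) = 1 - ε n u := by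
  rw [map_sub, map_one]

lemma exists_inv (n : ℕ) (a : S) (ha : evE 0 a ≠ 0) :
    ∃ b : S, ε n a * ε n b = 1 := by
  set s : ℂ := evE 0 a with hs
  set u : S := 1 - AddMonoidAlgebra.single (0:ℤ) s⁻¹ * a with hu
  refine ⟨AddMonoidAlgebra.single (0:ℤ) s⁻¹ * ∑ m ∈ Finset.range n, u ^ m, ?_⟩
  have h0 : evE 0 u = 0 := by
    rw [hu, map_sub, map_one, map_mul, evE_single, inv_mul_cancel₀ ha, sub_self]
  have hnil := ε_nilpotent n u h0
  have key : ε n a * ε n (AddMonoidAlgebra.single (0:ℤ) s⁻¹) = 1 - ε n u := by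
    rw [hu, ε_one_sub, sub_sub_cancel, map_mul, mul_comm]
  rw [map_mul, ← mul_assoc, key]
  have hgeom := geom_sum_mul (ε n u) n
  have : ε n (∑ m ∈ Finset.range n, u ^ m) = ∑ m ∈ Finset.range n, (ε n u) ^ m := by
    rw [map_sum]; exact Finset.sum_congr rfl fun m _ => map_pow _ _ _
  rw [this]
  linear_combination -hgeom - hnil

section MatrixPart

variable {r : ℕ}

/-- Package a matrix of trig polynomials as a finitely supported matrix sequence. -/
def toM (P : Matrix (Fin r) (Fin r) S) : ℤ →₀ Matrix (Fin r) (Fin r) ℂ :=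
  Finsupp.onFinset (Finset.univ.biUnion fun p : Fin r × Fin r => ((P p.1 p.2).coeff).support)
    (fun k => Matrix.of fun i j => (P i j).coeff k)
    (fun k hk => by
      by_contra hmem
      apply hk
      ext i j
      simp only [Matrix.of_apply]
      by_contra h0
      exact hmem (Finset.mem_biUnion.mpr ⟨(i, j), Finset.mem_univ _,
        Finsupp.mem_support_iff.mpr h0⟩))

lemma trigSymM_toM (P : Matrix (Fin r) (Fin r) S) (ξ : ℝ) (i j : Fin r) :
    trigSymM (toM P) ξ i j = trigSym (P i j).coeff ξ := by
  classical
  set t := Finset.univ.biUnion fun p : Fin r × Fin r => ((P p.1 p.2).coeff).support with ht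
  have h1 : trigSymM (toM P) ξ
      = ∑ k ∈ t, Complex.exp (-Complex.I * (k : ℂ) * (ξ : ℂ)) • (toM P) k := by
    rw [trigSymM]
    exact Finsupp.sum_of_support_subset _ (Finsupp.support_onFinset_subset) _
      (fun k _ => smul_zero _)
  have h2 : trigSym (P i j).coeff ξ
      = ∑ k ∈ t, (P i j).coeff k * Complex.exp (-Complex.I * (k : ℂ) * (ξ : ℂ)) := by
    rw [trigSym]
    refine Finsupp.sum_of_support_subset _ ?_ _ (fun k _ => zero_mul _)
    intro k hk
    exact Finset.mem_biUnion.mpr ⟨(i, j), Finset.mem_univ _, hk⟩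
  rw [h1, h2, Matrix.sum_apply]
  refine Finset.sum_congr rfl fun k _ => ?_
  rw [Matrix.smul_apply, smul_eq_mul, mul_comm]
  congr 1

lemma det_trigSymM (P : Matrix (Fin r) (Fin r) S) (hdet : P.det = 1) (ξ : ℝ) :
    (trigSymM (toM P) ξ).det = 1 := by
  have hmap : trigSymM (toM P) ξ = P.map ((evE ξ : S →+* ℂ) : S → ℂ) := by
    ext i j
    rw [Matrix.map_apply, trigSymM_toM, trigSym_eq]
    rfl
  have hd2 := RingHom.map_det ((evE ξ) : S →+* ℂ) P
  rw [hdet, map_one, RingHom.mapMatrix_apply] at hd2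
  rw [hmap, ← hd2]

/-- The elementary matrix adding `d k` times column `i₀` to each column `k`. -/
def elemE (i₀ : Fin r) (d : Fin r → S) : Matrix (Fin r) (Fin r) S :=
  1 + Matrix.replicateCol Unit (Pi.single i₀ (1 : S)) * Matrix.replicateRow Unit d

lemma det_elemE (i₀ : Fin r) (d : Fin r → S) (hd : d i₀ = 0) : (elemE i₀ d).det = 1 := by
  rw [elemE, Matrix.det_one_add_replicateCol_mul_replicateRow, dotProduct_single, hd, zero_mul, add_zero]

lemma vecMul_elemE (w : Fin r → S) (i₀ : Fin r) (d : Fin r → S) (k : Fin r) :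
    Matrix.vecMul w (elemE i₀ d) k = w k + w i₀ * d k := by
  rw [elemE, Matrix.vecMul_add, Matrix.vecMul_one, Pi.add_apply, ← Matrix.vecMul_vecMul]
  congr 1
  have hcol : Matrix.vecMul w (Matrix.replicateCol Unit (Pi.single i₀ 1)) =
      fun _ => w i₀ := by
    funext u
    simp [Matrix.vecMul, Matrix.replicateCol, dotProduct_single]
  rw [hcol]
  simp [Matrix.vecMul, Matrix.replicateRow, dotProduct]

end MatrixPart

end

end RowNorm

theorem row_normalization (r : ℕ) (hr : 2 ≤ r) (n : ℕ) (hn : 1 ≤ n)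
    (v : Fin r → ℤ →₀ ℂ) (hv : ∃ i, trigSym (v i) 0 ≠ 0) :
    ∃ U : ℤ →₀ Matrix (Fin r) (Fin r) ℂ,
      (∀ ξ : ℝ, (trigSymM U ξ).det = 1) ∧
      (∀ j : Fin r, derivsMatch n
        (fun ξ => ∑ i, trigSym (v i) ξ * trigSymM U ξ i j)
        (fun _ => if (j : ℕ) = 0 then 1 else 0)) := by
  classical
  open RowNorm in
  obtain ⟨i0, hi0⟩ := hv
  haveI : NeZero r := ⟨by omega⟩
  have h01 : (0 : Fin r) ≠ 1 := by
    intro h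
    have h2 : (0 : ℕ) = 1 % r := congrArg Fin.val h
    rw [Nat.mod_eq_of_lt (by omega)] at h2
    omega
  set vS : Fin r → RowNorm.S := fun i => AddMonoidAlgebra.ofCoeff (v i) with hvS
  have hi0' : evE 0 (vS i0) ≠ 0 := by
    rw [← trigSym_eq]; exact hi0
  -- Step 1: make the 0-th entry nonvanishing at the origin.
  set d1 : Fin r → RowNorm.S := fun k =>
    if k = 0 ∧ i0 ≠ 0 then
      AddMonoidAlgebra.single (0:ℤ) ((1 - evE 0 (vS 0)) * (evE 0 (vS i0))⁻¹)
    else 0 with hd1def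
  have hd1 : d1 i0 = 0 := by
    by_cases h : i0 = 0 <;> simp [hd1def, h]
  set P1 := elemE i0 d1 with hP1
  set w1 := Matrix.vecMul vS P1 with hw1def
  have hw1 : ∀ k, w1 k = vS k + vS i0 * d1 k := fun k => vecMul_elemE vS i0 d1 k
  have ha : evE 0 (w1 0) ≠ 0 := by
    rw [hw1 0]
    by_cases h : i0 = 0
    · have hz : d1 0 = 0 := by simp [hd1def, h]
      rw [hz, mul_zero, add_zero, ← h]
      exact hi0'
    · have hz : d1 0 = AddMonoidAlgebra.single (0:ℤ)
          ((1 - evE 0 (vS 0)) * (evE 0 (vS i0))⁻¹) := by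
        simp [hd1def, h]
      rw [hz, map_add, map_mul, evE_single]
      have h1 : evE 0 (vS 0) + evE 0 (vS i0) *
          ((1 - evE 0 (vS 0)) * (evE 0 (vS i0))⁻¹) = 1 := by
        field_simp
        ring
      rw [h1]; exact one_ne_zero
  obtain ⟨b, hab⟩ := exists_inv n (w1 0) ha
  -- Step 2: kill all other entries mod X^n.
  set d2 : Fin r → RowNorm.S := fun k => if k = 0 then 0 else -(b * w1 k) with hd2def
  have hd2 : d2 0 = 0 := by simp [hd2def]
  set P2 := elemE 0 d2 with hP2
  set w2 := Matrix.vecMul w1 P2 with hw2def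
  have hw2 : ∀ k, w2 k = w1 k + w1 0 * d2 k := fun k => vecMul_elemE w1 0 d2 k
  have hw20 : w2 0 = w1 0 := by rw [hw2 0, hd2, mul_zero, add_zero]
  have hε2 : ∀ k, k ≠ 0 → ε n (w2 k) = 0 := by
    intro k hk
    have hk2 : w2 k = w1 k - w1 0 * (b * w1 k) := by
      rw [hw2 k, hd2def]
      simp [hk]
      ring
    rw [hk2, map_sub, map_mul, map_mul]
    linear_combination (-(ε n (w1 k))) * hab
  -- Step 3
  set d3 : Fin r → RowNorm.S := Pi.single 1 b with hd3def
  have hd3 : d3 0 = 0 := by simp [hd3def, Pi.single_apply, h01]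
  set P3 := elemE 0 d3 with hP3
  set w3 := Matrix.vecMul w2 P3 with hw3def
  have hw3 : ∀ k, w3 k = w2 k + w2 0 * d3 k := fun k => vecMul_elemE w2 0 d3 k
  have hw3ne : ∀ k, k ≠ 1 → w3 k = w2 k := by
    intro k hk
    rw [hw3 k, hd3def, Pi.single_eq_of_ne hk, mul_zero, add_zero]
  have hε31 : ε n (w3 1) = 1 := by
    rw [hw3 1, hd3def, Pi.single_eq_same, hw20, map_add, map_mul,
      hε2 1 (Ne.symm h01), zero_add]
    exact hab
  -- Step 4
  set d4 : Fin r → RowNorm.S := Pi.single 0 (-(w1 0)) with hd4def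
  have hd4 : d4 1 = 0 := by simp [hd4def, Pi.single_apply, Ne.symm h01]
  set P4 := elemE 1 d4 with hP4
  set w4 := Matrix.vecMul w3 P4 with hw4def
  have hw4 : ∀ k, w4 k = w3 k + w3 1 * d4 k := fun k => vecMul_elemE w3 1 d4 k
  have hw4ne : ∀ k, k ≠ 0 → w4 k = w3 k := by
    intro k hk
    rw [hw4 k, hd4def, Pi.single_eq_of_ne hk, mul_zero, add_zero]
  have hε40 : ε n (w4 0) = 0 := by
    rw [hw4 0, hd4def, Pi.single_eq_same, hw3ne 0 h01, hw20, map_add, map_mul, hε31]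
    simp
  -- Step 5
  set d5 : Fin r → RowNorm.S := Pi.single 0 (1 : RowNorm.S) with hd5def
  have hd5 : d5 1 = 0 := by simp [hd5def, Pi.single_apply, Ne.symm h01]
  set P5 := elemE 1 d5 with hP5
  set w5 := Matrix.vecMul w4 P5 with hw5def
  have hw5 : ∀ k, w5 k = w4 k + w4 1 * d5 k := fun k => vecMul_elemE w4 1 d5 k
  have hw5ne : ∀ k, k ≠ 0 → w5 k = w4 k := by
    intro k hk
    rw [hw5 k, hd5def, Pi.single_eq_of_ne hk, mul_zero, add_zero]
  have hε50 : ε n (w5 0) = 1 := by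
    rw [hw5 0, hd5def, Pi.single_eq_same, mul_one, map_add, hε40, zero_add,
      hw4ne 1 (Ne.symm h01), hε31]
  -- Step 6
  set d6 : Fin r → RowNorm.S := Pi.single 1 (-1 : RowNorm.S) with hd6def
  have hd6 : d6 0 = 0 := by simp [hd6def, Pi.single_apply, h01]
  set P6 := elemE 0 d6 with hP6
  set w6 := Matrix.vecMul w5 P6 with hw6def
  have hw6 : ∀ k, w6 k = w5 k + w5 0 * d6 k := fun k => vecMul_elemE w5 0 d6 k
  have hε60 : ε n (w6 0) = 1 := by
    rw [hw6 0, hd6def, Pi.single_eq_of_ne h01, mul_zero, add_zero, hε50]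
  have hε61 : ε n (w6 1) = 0 := by
    rw [hw6 1, hd6def, Pi.single_eq_same, map_add, map_mul, hε50,
      hw5ne 1 (Ne.symm h01), hw4ne 1 (Ne.symm h01), hε31]
    simp
  have hε6ne : ∀ k, k ≠ 0 → k ≠ 1 → ε n (w6 k) = 0 := by
    intro k hk0 hk1
    rw [hw6 k, hd6def, Pi.single_eq_of_ne hk1, mul_zero, add_zero,
      hw5ne k hk0, hw4ne k hk0, hw3ne k hk1]
    exact hε2 k hk0
  -- Assemble the matrix.
  set P := P1 * P2 * P3 * P4 * P5 * P6 with hPdef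
  have hdP : P.det = 1 := by
    rw [hPdef, Matrix.det_mul, Matrix.det_mul, Matrix.det_mul, Matrix.det_mul,
      Matrix.det_mul, hP1, hP2, hP3, hP4, hP5, hP6,
      det_elemE i0 d1 hd1, det_elemE 0 d2 hd2, det_elemE 0 d3 hd3,
      det_elemE 1 d4 hd4, det_elemE 1 d5 hd5, det_elemE 0 d6 hd6]
    ring
  have hwP : Matrix.vecMul vS P = w6 := by
    rw [hPdef, ← Matrix.vecMul_vecMul, ← Matrix.vecMul_vecMul, ← Matrix.vecMul_vecMul,
      ← Matrix.vecMul_vecMul, ← Matrix.vecMul_vecMul, ← hw1def, ← hw2def, ← hw3def,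
      ← hw4def, ← hw5def, ← hw6def]
  refine ⟨toM P, fun ξ => det_trigSymM P hdP ξ, ?_⟩
  intro j
  have hfun : (fun ξ => ∑ i, trigSym (v i) ξ * trigSymM (toM P) ξ i j)
      = trigSym (w6 j).coeff := by
    funext ξ
    have hterm : ∀ i, trigSym (v i) ξ * trigSymM (toM P) ξ i j
        = evE ξ (vS i * P i j) := by
      intro i
      rw [trigSymM_toM, map_mul, trigSym_eq (vS i), trigSym_eq (P i j)]
    calc (∑ i, trigSym (v i) ξ * trigSymM (toM P) ξ i j)
        = ∑ i, evE ξ (vS i * P i j) := Finset.sum_congr rfl fun i _ => hterm i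
      _ = evE ξ (∑ i, vS i * P i j) := (map_sum _ _ _).symm
      _ = trigSym (w6 j).coeff ξ := by
          rw [← hwP, ← trigSym_eq]
          congr 1
  have hconst : (fun _ : ℝ => if (j : ℕ) = 0 then (1:ℂ) else 0)
      = trigSym (AddMonoidAlgebra.single (0:ℤ) (if (j : ℕ) = 0 then (1:ℂ) else 0)).coeff := by
    funext ξ
    rw [trigSym, AddMonoidAlgebra.coeff_single, Finsupp.sum_single_index (by simp)]
    simp
  rw [hfun, hconst]
  apply derivsMatch_of_ε_eq
  by_cases hj0 : j = 0
  · subst hj0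
    have hone : (if ((0 : Fin r) : ℕ) = 0 then (1:ℂ) else 0) = 1 := by simp
    rw [hone, ← AddMonoidAlgebra.one_def, map_one, hε60]
  · have hjv : ¬ ((j : ℕ) = 0) := by
      intro h
      exact hj0 (Fin.ext (by simp [h]))
    have hzero : (if (j : ℕ) = 0 then (1:ℂ) else 0) = 0 := by simp [hjv]
    rw [hzero, AddMonoidAlgebra.single_zero, map_zero]
    by_cases hj1 : j = 1
    · rw [hj1, hε61]
    · exact hε6ne j hj0 hj1
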